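/- Let M_0 be a subset of Z^* of cardinality d, let j be a natural number and d' an integer. Then ∑_N (−1)^{card(N ∩ M_0)} = C(z', j) · ∑_{k=0}^{d} (−1)^k C(d, k) · C(z − d, j + d' − k), where the first sum runs over all subsets N of Z with card(N ∩ Z_*) = j and card(N ∩ Z^*) = j + d' (equality of integers). -/

import Mathlib

/-- Binomial coefficient `C(m, a)` with an integer lower argument: it is `0`
unless `0 ≤ a`, and equals the usual binomial coefficient otherwise
(which is itself `0` when `a > m`). -/
def intChoose (m : ℕ) (a : ℤ) : ℤ := if 0 ≤ a then (m.choose a.toNat : ℤ) else 0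

open Finset in
lemma sum_split_aux {α : Type*} [DecidableEq α] (S T : Finset α) (h : Disjoint S T)
    (f : Finset α → ℤ) :
    ∑ N ∈ (S ∪ T).powerset, f N = ∑ A ∈ S.powerset, ∑ B ∈ T.powerset, f (A ∪ B) := by
  rw [← Finset.sum_product']
  refine Finset.sum_nbij' (i := fun N ↦ (N ∩ S, N ∩ T)) (j := fun p ↦ p.1 ∪ p.2)
    ?_ ?_ ?_ ?_ ?_
  · intro N hN
    simp [Finset.mem_product, Finset.inter_subset_right]
  · intro p hp
    simp only [Finset.mem_product, Finset.mem_powerset] at hp ⊢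
    exact Finset.union_subset_union hp.1 hp.2
  · intro N hN
    simp only [Finset.mem_powerset] at hN
    simp only [← Finset.inter_union_distrib_left]
    exact Finset.inter_eq_left.mpr hN
  · intro p hp
    simp only [Finset.mem_product, Finset.mem_powerset] at hp
    have h1 : (p.1 ∪ p.2) ∩ S = p.1 := by
      rw [Finset.union_inter_distrib_right, Finset.inter_eq_left.mpr hp.1,
        Finset.disjoint_iff_inter_eq_empty.mp ((h.symm.mono_left hp.2)), Finset.union_empty]
    have h2 : (p.1 ∪ p.2) ∩ T = p.2 := by
      rw [Finset.union_inter_distrib_right, Finset.inter_eq_left.mpr hp.2,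
        Finset.disjoint_iff_inter_eq_empty.mp ((h.mono_left hp.1)), Finset.empty_union]
    simp [h1, h2]
  · intro N hN
    simp only [Finset.mem_powerset] at hN
    rw [← Finset.inter_union_distrib_left, Finset.inter_eq_left.mpr hN]

open Finset in
lemma count_aux {α : Type*} [DecidableEq α] (s : Finset α) (c : ℕ) (t : ℤ) :
    ∑ B ∈ s.powerset, (if ((c : ℤ) + (B.card : ℤ) = t) then (1 : ℤ) else 0)
      = intChoose s.card (t - c) := by
  unfold intChoose
  by_cases hneg : 0 ≤ t - (c : ℤ)
  · rw [if_pos hneg]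
    have : ∀ B : Finset α, ((c : ℤ) + (B.card : ℤ) = t) ↔ B.card = (t - c).toNat := by
      intro B
      omega
    simp_rw [this]
    rw [← Finset.sum_filter, ← powersetCard_eq_filter]
    simp [card_powersetCard]
  · rw [if_neg hneg]
    apply Finset.sum_eq_zero
    intro B _
    rw [if_neg]
    omega

theorem stmt_6 {α : Type*} [DecidableEq α] [Fintype α]
    (Zstar Zsub : Finset α) (hdisj : Disjoint Zstar Zsub)
    (hunion : Zstar ∪ Zsub = Finset.univ)
    (z z' : ℕ) (hz : Zstar.card = z) (hz' : Zsub.card = z')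
    (M0 : Finset α) (hM0 : M0 ⊆ Zstar) (d : ℕ) (hd : M0.card = d)
    (j : ℕ) (d' : ℤ) :
    ∑ N ∈ Finset.univ.filter (fun N : Finset α =>
        (N ∩ Zsub).card = j ∧ ((N ∩ Zstar).card : ℤ) = (j : ℤ) + d'),
      (-1 : ℤ) ^ ((N ∩ M0).card)
      = (z'.choose j : ℤ) *
          ∑ k ∈ Finset.range (d + 1),
            (-1 : ℤ) ^ k * (d.choose k : ℤ) * intChoose (z - d) ((j : ℤ) + d' - k) := by
  classical
  rw [Finset.sum_filter]
  have huniv : (Finset.univ : Finset (Finset α)) = (Zstar ∪ Zsub).powerset := by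
    rw [hunion, Finset.powerset_univ]
  rw [huniv, sum_split_aux _ _ hdisj]
  have hAB : ∀ A ∈ Zstar.powerset, ∀ B ∈ Zsub.powerset,
      ((A ∪ B) ∩ Zsub = B ∧ (A ∪ B) ∩ Zstar = A) ∧ (A ∪ B) ∩ M0 = A ∩ M0 := by
    intro A hA B hB
    simp only [Finset.mem_powerset] at hA hB
    refine ⟨⟨?_, ?_⟩, ?_⟩
    · rw [Finset.union_inter_distrib_right, Finset.inter_eq_left.mpr hB,
        Finset.disjoint_iff_inter_eq_empty.mp (hdisj.mono_left hA), Finset.empty_union]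
    · rw [Finset.union_inter_distrib_right, Finset.inter_eq_left.mpr hA,
        Finset.disjoint_iff_inter_eq_empty.mp (hdisj.symm.mono_left hB), Finset.union_empty]
    · rw [Finset.union_inter_distrib_right,
        Finset.disjoint_iff_inter_eq_empty.mp (hdisj.symm.mono hB hM0), Finset.union_empty]
  calc
    ∑ A ∈ Zstar.powerset, ∑ B ∈ Zsub.powerset,
        (if (((A ∪ B) ∩ Zsub).card = j ∧ ((((A ∪ B) ∩ Zstar).card : ℤ) = (j : ℤ) + d'))
          then (-1 : ℤ) ^ (((A ∪ B) ∩ M0).card) else 0)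
      = ∑ A ∈ Zstar.powerset, ∑ B ∈ Zsub.powerset,
        ((if B.card = j then (1:ℤ) else 0) *
         (if ((A.card : ℤ) = (j : ℤ) + d') then (-1 : ℤ) ^ ((A ∩ M0).card) else 0)) := by
        refine Finset.sum_congr rfl fun A hA ↦ Finset.sum_congr rfl fun B hB ↦ ?_
        obtain ⟨⟨h1, h2⟩, h3⟩ := hAB A hA B hB
        rw [h1, h2, h3, ite_and]
        by_cases hb : B.card = j <;> by_cases ha : (A.card : ℤ) = (j : ℤ) + d' <;>
          simp [hb, ha]
    _ = (z'.choose j : ℤ) *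
        ∑ A ∈ Zstar.powerset,
          (if ((A.card : ℤ) = (j : ℤ) + d') then (-1 : ℤ) ^ ((A ∩ M0).card) else 0) := by
        rw [Finset.sum_comm]
        rw [← Finset.sum_mul_sum]
        congr 1
        rw [← Finset.sum_filter, ← Finset.powersetCard_eq_filter]
        simp [hz']
    _ = (z'.choose j : ℤ) *
          ∑ k ∈ Finset.range (d + 1),
            (-1 : ℤ) ^ k * (d.choose k : ℤ) * intChoose (z - d) ((j : ℤ) + d' - k) := by
        congr 1
        have hZ : Zstar = M0 ∪ (Zstar \ M0) := (Finset.union_sdiff_of_subset hM0).symm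
        have hdisj2 : Disjoint M0 (Zstar \ M0) := Finset.disjoint_sdiff
        rw [hZ, sum_split_aux _ _ hdisj2]
        have step : ∀ A1 ∈ M0.powerset, ∀ A2 ∈ (Zstar \ M0).powerset,
            (if (((A1 ∪ A2).card : ℤ) = (j : ℤ) + d')
              then (-1 : ℤ) ^ (((A1 ∪ A2) ∩ M0).card) else 0)
            = (-1 : ℤ) ^ A1.card *
              (if ((A1.card : ℤ) + (A2.card : ℤ) = (j : ℤ) + d') then (1:ℤ) else 0) := by
          intro A1 h1 A2 h2
          simp only [Finset.mem_powerset] at h1 h2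
          have hd12 : Disjoint A1 A2 := hdisj2.mono h1 h2
          have hM : (A1 ∪ A2) ∩ M0 = A1 := by
            rw [Finset.union_inter_distrib_right, Finset.inter_eq_left.mpr h1,
              Finset.disjoint_iff_inter_eq_empty.mp
                (Finset.disjoint_sdiff.symm.mono_left h2), Finset.union_empty]
          rw [hM, Finset.card_union_of_disjoint hd12]
          push_cast
          by_cases hc : (A1.card : ℤ) + (A2.card : ℤ) = (j : ℤ) + d' <;> simp [hc]
        rw [Finset.sum_congr rfl (fun A1 h1 ↦ Finset.sum_congr rfl (step A1 h1))]
        have inner : ∀ A1 : Finset α,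
            ∑ A2 ∈ (Zstar \ M0).powerset,
              ((-1 : ℤ) ^ A1.card *
                (if ((A1.card : ℤ) + (A2.card : ℤ) = (j : ℤ) + d') then (1:ℤ) else 0))
            = (-1 : ℤ) ^ A1.card * intChoose (z - d) ((j : ℤ) + d' - A1.card) := by
          intro A1
          rw [← Finset.mul_sum, count_aux]
          congr 2
          rw [Finset.card_sdiff_of_subset hM0, hz, hd]
        simp_rw [inner]
        rw [Finset.sum_powerset]
        rw [hd]
        refine Finset.sum_congr rfl fun k hk ↦ ?_
        rw [Finset.sum_congr rfl (fun A1 h1 ↦ by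
          rw [(Finset.mem_powersetCard.mp h1).2])]
        rw [Finset.sum_const, Finset.card_powersetCard, hd, nsmul_eq_mul]
        ring
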